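/- Let κ > 0, T > 0, t ∈ [0,T], τ = T - t, θ > 0, σ² ≥ 0, ν > 0, φ(s) = (1 - e^{-κ(T-s)})/κ, m(u) = θ + (σ² - θ)e^{-κ(u-t)}. Then (ν³/8) ∫_t^T m(u) (∫_u^T e^{-κ(z-u)} φ(z)² dz) du = (ν³/(16κ⁴)) { θ[ (2κτ - 7) + 2e^{-κτ}(κ²τ² + 2κτ + 4) - e^{-2κτ} ] - 2σ² e^{-κτ}[ κ²τ² - 2cosh(κτ) + 2 ] }. -/

import Mathlib

set_option maxHeartbeats 2000000 in
theorem D_M_DMM_closed_form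
    (κ T t τ θ σsq ν : ℝ) (hκ : 0 < κ) (hT : 0 < T) (ht : t ∈ Set.Icc (0:ℝ) T)
    (hτ : τ = T - t) (hθ : 0 < θ) (hσ : 0 ≤ σsq) (hν : 0 < ν)
    (φ : ℝ → ℝ) (hφ : ∀ s, φ s = (1 - Real.exp (-κ * (T - s))) / κ)
    (m : ℝ → ℝ) (hm : ∀ u, m u = θ + (σsq - θ) * Real.exp (-κ * (u - t))) :
    (ν ^ 3 / 8) * ∫ u in t..T, m u * ∫ z in u..T, Real.exp (-κ * (z - u)) * (φ z) ^ 2 =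
      (ν ^ 3 / (16 * κ ^ 4)) *
        (θ * ((2 * κ * τ - 7) +
              2 * Real.exp (-κ * τ) * (κ ^ 2 * τ ^ 2 + 2 * κ * τ + 4) -
              Real.exp (-2 * κ * τ)) -
         2 * σsq * Real.exp (-κ * τ) *
           (κ ^ 2 * τ ^ 2 - 2 * Real.cosh (κ * τ) + 2)) := by
  have hκ' : κ ≠ 0 := hκ.ne'
  have hexp : ∀ (b z : ℝ), HasDerivAt (fun x => Real.exp (b*x)) (b * Real.exp (b*z)) z := by
    intro b z
    simpa [mul_comm] using ((hasDerivAt_id z).const_mul b).exp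
  simp only [hφ, hm]
  -- Step 1: inner integral
  have hinner : ∀ u : ℝ,
      (∫ z in u..T, Real.exp (-κ * (z - u)) * ((1 - Real.exp (-κ * (T - z))) / κ) ^ 2)
      = (1/κ^3) * (1 - 2*κ*(T-u)*Real.exp (-κ*(T-u)) - Real.exp (-(2*κ)*(T-u))) := by
    intro u
    have hder : ∀ z ∈ Set.uIcc u T,
        HasDerivAt (fun z => Real.exp (κ*u) / κ^2 *
          (-(1/κ) * Real.exp ((-κ)*z) - 2*Real.exp (-κ*T) * z
            + Real.exp (-(2*κ)*T)/κ * Real.exp (κ*z)))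
          (Real.exp (-κ * (z - u)) * ((1 - Real.exp (-κ * (T - z))) / κ) ^ 2) z := by
      intro z _
      have h1 := ((hexp (-κ) z).const_mul (-(1/κ)))
      have h2 := ((hasDerivAt_id z).const_mul (2*Real.exp (-κ*T)))
      have h3 := ((hexp κ z).const_mul (Real.exp (-(2*κ)*T)/κ))
      have := ((h1.sub h2).add h3).const_mul (Real.exp (κ*u) / κ^2)
      convert this using 1
      case e'_4 => rfl
      case e'_5 => rfl
      case e'_8 => rfl
      rw [show -κ * (z - u) = κ*u + -(κ*z) by ring,
          show -κ * (T - z) = κ*z + -(κ*T) by ring,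
          show -(2*κ) * T = -(κ*T) + -(κ*T) by ring,
          show (-κ)*z = -(κ*z) by ring,
          show -κ*T = -(κ*T) by ring]
      simp only [Real.exp_add, Real.exp_neg]
      have e1 := Real.exp_ne_zero (κ*T)
      have e2 := Real.exp_ne_zero (κ*z)
      field_simp
      ring
    have hint : IntervalIntegrable
        (fun z => Real.exp (-κ * (z - u)) * ((1 - Real.exp (-κ * (T - z))) / κ) ^ 2)
        MeasureTheory.volume u T := by
      apply Continuous.intervalIntegrable; fun_prop
    rw [intervalIntegral.integral_eq_sub_of_hasDerivAt hder hint]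
    rw [show -(2*κ) * (T - u) = (κ*u + κ*u) + (-(κ*T) + -(κ*T)) by ring,
        show -κ * (T - u) = κ*u + -(κ*T) by ring,
        show -(2*κ)*T = -(κ*T) + -(κ*T) by ring,
        show (-κ)*T = -(κ*T) by ring,
        show (-κ)*u = -(κ*u) by ring]
    simp only [Real.exp_add, Real.exp_neg]
    have e1 := Real.exp_ne_zero (κ*T)
    have e2 := Real.exp_ne_zero (κ*u)
    field_simp
    ring
  simp only [hinner]
  -- Step 2: outer integral
  set c := σsq - θ with hc
  have hder2 : ∀ u ∈ Set.uIcc t T,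
      HasDerivAt (fun u =>
          θ/κ^3 * u
          - (2*θ/κ^3 * Real.exp (-κ*T)) * ((T-u) * Real.exp (κ*u))
          - (2*θ/κ^4 * Real.exp (-κ*T)) * Real.exp (κ*u)
          - (θ/(2*κ^4) * Real.exp (-(2*κ)*T)) * Real.exp ((2*κ)*u)
          - (c/κ^4 * Real.exp (κ*t)) * Real.exp ((-κ)*u)
          + (c/κ^2 * Real.exp (κ*t - κ*T)) * (T-u)^2
          - (c/κ^4 * Real.exp (κ*t - 2*κ*T)) * Real.exp (κ*u))
        ((θ + c * Real.exp (-κ * (u - t))) *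
          (1/κ^3 * (1 - 2*κ*(T-u)*Real.exp (-κ*(T-u)) - Real.exp (-(2*κ)*(T-u))))) u := by
    intro u _
    have h1 : HasDerivAt (fun x : ℝ => θ/κ^3 * x) (θ/κ^3) u := by
      simpa using (hasDerivAt_id u).const_mul (θ/κ^3)
    have h2 := (((hasDerivAt_id u).const_sub T).mul (hexp κ u)).const_mul
        (2*θ/κ^3 * Real.exp (-κ*T))
    have h3 := (hexp κ u).const_mul (2*θ/κ^4 * Real.exp (-κ*T))
    have h4 := (hexp (2*κ) u).const_mul (θ/(2*κ^4) * Real.exp (-(2*κ)*T))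
    have h5 := (hexp (-κ) u).const_mul (c/κ^4 * Real.exp (κ*t))
    have h6 := (((hasDerivAt_id u).const_sub T).pow 2).const_mul
        (c/κ^2 * Real.exp (κ*t - κ*T))
    have h7 := (hexp κ u).const_mul (c/κ^4 * Real.exp (κ*t - 2*κ*T))
    have := (((((h1.sub h2).sub h3).sub h4).sub h5).add h6).sub h7
    convert this using 1
    case e'_4 => rfl
    case e'_5 => rfl
    case e'_8 => rfl
    rw [show -κ * (u - t) = κ*t + -(κ*u) by ring,
        show -(2*κ) * (T - u) = (κ*u + κ*u) + (-(κ*T) + -(κ*T)) by ring,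
        show -κ * (T - u) = κ*u + -(κ*T) by ring,
        show κ*t - 2*κ*T = κ*t + (-(κ*T) + -(κ*T)) by ring,
        show κ*t - κ*T = κ*t + -(κ*T) by ring,
        show -(2*κ)*T = -(κ*T) + -(κ*T) by ring,
        show (2*κ)*u = κ*u + κ*u by ring,
        show (-κ)*u = -(κ*u) by ring,
        show -κ*T = -(κ*T) by ring]
    simp only [Real.exp_add, Real.exp_neg, id]
    have e1 := Real.exp_ne_zero (κ*T)
    have e2 := Real.exp_ne_zero (κ*u)
    field_simp
    ring
  have hint2 : IntervalIntegrable
      (fun u => (θ + c * Real.exp (-κ * (u - t))) *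
        (1/κ^3 * (1 - 2*κ*(T-u)*Real.exp (-κ*(T-u)) - Real.exp (-(2*κ)*(T-u)))))
      MeasureTheory.volume t T := by
    apply Continuous.intervalIntegrable; fun_prop
  rw [intervalIntegral.integral_eq_sub_of_hasDerivAt hder2 hint2]
  -- Step 3: final algebra
  subst hτ
  rw [Real.cosh_eq]
  rw [show -(κ*(T-t)) = κ*t + -(κ*T) by ring,
      show -2 * κ * (T - t) = (κ*t + κ*t) + (-(κ*T) + -(κ*T)) by ring,
      show -κ * (T - t) = κ*t + -(κ*T) by ring,
      show κ * (T - t) = κ*T + -(κ*t) by ring,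
      show κ*t - 2*κ*T = κ*t + (-(κ*T) + -(κ*T)) by ring,
      show κ*t - κ*T = κ*t + -(κ*T) by ring,
      show -(2*κ)*T = -(κ*T) + -(κ*T) by ring,
      show (2*κ)*T = κ*T + κ*T by ring,
      show (2*κ)*t = κ*t + κ*t by ring,
      show (-κ)*T = -(κ*T) by ring,
      show (-κ)*t = -(κ*t) by ring]
  simp only [Real.exp_add, Real.exp_neg]
  have e1 := Real.exp_ne_zero (κ*T)
  have e2 := Real.exp_ne_zero (κ*t)
  field_simp
  ring
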